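/- Let V be a finite set with |V| = d, let 2 ≤ k ≤ d − 1, and let T be a k-order cherry tree on V. If T is a truncated R-vine at level k (i.e., T is the top tree of some cherry-vine sequence T_2, …, T_k on V), then the separators of T form a (k − 1)-order cherry tree. -/

import Mathlib

/-- A junction tree on a vertex set `V`: a finite tree `G` with nodes labeled by
clusters (finite subsets of `V`), such that no cluster is contained in the cluster
of another node and the running intersection property holds.  (The covering
condition "the clusters cover `V`" is stated separately as `JTree.CoversAll`,
so that junction trees on subsets of `V`, such as the tree formed by the
separators, can be treated uniformly.) -/
structure JTree (V : Type) [DecidableEq V] where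
  ι : Type
  [fin : Fintype ι]
  [deq : DecidableEq ι]
  G : SimpleGraph ι
  isTree : G.IsTree
  C : ι → Finset V
  noSub : ∀ i j : ι, i ≠ j → ¬ C i ⊆ C j
  rip : ∀ (i j : ι) (p : G.Walk i j), p.IsPath → ∀ x ∈ p.support, C i ∩ C j ⊆ C x

attribute [instance] JTree.fin JTree.deq

namespace JTree

variable {V : Type} [DecidableEq V]

/-- The clusters cover all of `V`: the junction tree is a junction tree "on `V`". -/
def CoversAll (T : JTree V) : Prop := ∀ v : V, ∃ i, v ∈ T.C i

/-- `T` is a `k`-order cherry tree: every cluster has exactly `k` elements and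
every edge-separator has exactly `k - 1` elements. -/
def IsCherry (T : JTree V) (k : ℕ) : Prop :=
  (∀ i, (T.C i).card = k) ∧ ∀ i j, T.G.Adj i j → (T.C i ∩ T.C j).card = k - 1

/-- The set of (distinct) separators of `T`. -/
def separators (T : JTree V) : Set (Finset V) :=
  { s | ∃ i j, T.G.Adj i j ∧ s = T.C i ∩ T.C j }

/-- The separators of `T` form a `(k-1)`-order cherry tree: there is a junction
tree whose set of clusters is exactly the set of distinct separators of `T`, in
which every cluster has `k - 1` elements and every edge-separator has `k - 2`
elements. -/
def SeparatorsFormCherry (T : JTree V) (k : ℕ) : Prop :=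
  ∃ T' : JTree V, T'.IsCherry (k - 1) ∧ Set.range T'.C = T.separators

/-- Every cluster of `T'` is the union of two clusters that are adjacent in `T`. -/
def Succ (T T' : JTree V) : Prop :=
  ∀ i' : T'.ι, ∃ i j : T.ι, T.G.Adj i j ∧ T'.C i' = T.C i ∪ T.C j

/-- `T` is a truncated R-vine at level `k`: there exists a cherry-vine sequence
`T₂, …, T_k` on `V` (with `T_m` an `m`-order cherry tree on `V` and each cluster of
`T_{m+1}` the union of two adjacent clusters of `T_m`) whose top tree `T_k` is `T`. -/
def IsTruncatedRVine (T : JTree V) (k : ℕ) : Prop :=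
  ∃ Ts : ℕ → JTree V,
    (∀ m, 2 ≤ m → m ≤ k → (Ts m).CoversAll ∧ (Ts m).IsCherry m) ∧
    (∀ m, 2 ≤ m → m < k → Succ (Ts m) (Ts (m + 1))) ∧
    Ts k = T

/-- The separator attached to an edge of the tree, as a function on `Sym2`. -/
noncomputable def sep (T : JTree V) : Sym2 T.ι → Finset V :=
  Sym2.lift ⟨fun i j => T.C i ∩ T.C j, fun _ _ => Finset.inter_comm _ _⟩

/-- The (finite) set of edges of the tree underlying `T`. -/
noncomputable def edgeFinset (T : JTree V) : Finset (Sym2 T.ι) :=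
  Set.Finite.toFinset (Set.toFinite T.G.edgeSet)

end JTree


namespace JTree

open SimpleGraph

variable {V : Type} [DecidableEq V]

noncomputable def pth (T : JTree V) (a b : T.ι) : T.G.Walk a b :=
  (T.isTree.existsUnique_path a b).exists.choose

lemma pth_isPath (T : JTree V) (a b : T.ι) : (T.pth a b).IsPath :=
  (T.isTree.existsUnique_path a b).exists.choose_spec

lemma eq_pth (T : JTree V) {a b : T.ι} (p : T.G.Walk a b) (hp : p.IsPath) :
    p = T.pth a b :=
  (T.isTree.existsUnique_path a b).unique hp (T.pth_isPath a b)

lemma C_injective (T : JTree V) : Function.Injective T.C := by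
  intro i j h
  by_contra hne
  exact T.noSub i j hne (le_of_eq h)

lemma start_mem_pth (T : JTree V) (a b : T.ι) : a ∈ (T.pth a b).support :=
  Walk.start_mem_support _

lemma tree_or (T : JTree V) {A B : T.ι} (h : T.G.Adj A B) (X : T.ι) :
    B ∈ (T.pth A X).support ∨ A ∈ (T.pth B X).support := by
  by_cases hB : B ∈ (T.pth A X).support
  · exact Or.inl hB
  · right
    have hpath : (Walk.cons h.symm (T.pth A X)).IsPath :=
      (T.pth_isPath A X).cons hB
    rw [← T.eq_pth _ hpath, Walk.support_cons]
    exact List.mem_cons_of_mem _ (T.start_mem_pth A X)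

lemma concat_isPath {α : Type} {G : SimpleGraph α} {u v w : α} {p : G.Walk u v}
    (hp : p.IsPath) (h : G.Adj v w) (hw : w ∉ p.support) : (p.concat h).IsPath := by
  rw [← SimpleGraph.Walk.isPath_reverse_iff, Walk.reverse_concat]
  exact hp.reverse.cons (by simpa [Walk.support_reverse] using hw)

lemma tree_extend (T : JTree V) {A A' B' P : T.ι} (h' : T.G.Adj A' B')
    (hP : P ∈ (T.pth A A').support) (hne : P ≠ A') :
    P ∈ (T.pth A B').support := by
  by_cases hA' : A' ∈ (T.pth A B').support
  · have ht : ((T.pth A B').takeUntil A' hA').IsPath := (T.pth_isPath A B').takeUntil hA'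
    rw [← T.eq_pth _ ht] at hP
    exact Walk.support_takeUntil_subset _ hA' hP
  · have hpath : ((T.pth A B').concat h'.symm).IsPath :=
      concat_isPath (T.pth_isPath A B') h'.symm hA'
    have heq := T.eq_pth _ hpath
    rw [← heq, Walk.support_concat] at hP
    rw [List.mem_append] at hP
    rcases hP with h1 | h2
    · exact h1
    · exact absurd (List.mem_singleton.mp h2) hne

lemma pth_symm_mem (T : JTree V) {a b z : T.ι} (h : z ∈ (T.pth a b).support) :
    z ∈ (T.pth b a).support := by
  have : (T.pth a b).reverse = T.pth b a := T.eq_pth _ (T.pth_isPath a b).reverse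
  rw [← this, Walk.support_reverse]
  exact List.mem_reverse.mpr h

lemma inter_card_le (U : JTree V) {m : ℕ} (hch : U.IsCherry m) {P Q : U.ι} (hne : P ≠ Q) :
    (U.C P ∩ U.C Q).card ≤ m - 1 := by
  obtain ⟨R, hPR, q, heq⟩ := Walk.exists_eq_cons_of_ne hne (U.pth P Q)
  have hsub : U.C P ∩ U.C Q ⊆ U.C P ∩ U.C R := by
    refine Finset.subset_inter Finset.inter_subset_left ?_
    exact U.rip P Q (U.pth P Q) (U.pth_isPath P Q) R
      (by rw [heq, Walk.support_cons]; exact List.mem_cons_of_mem _ (Walk.start_mem_support _))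
  calc (U.C P ∩ U.C Q).card ≤ (U.C P ∩ U.C R).card := Finset.card_le_card hsub
    _ = m - 1 := hch.2 P R hPR

lemma exists_side (U : JTree V) {A B A' B' : U.ι} (hAB : U.G.Adj A B) (hA'B' : U.G.Adj A' B')
    (h1 : A ≠ A') (h3 : B ≠ A') :
    ∃ P, (P = A ∨ P = B) ∧ ∀ a, (a = A ∨ a = B) → ∀ a', (a' = A' ∨ a' = B') →
      P ∈ (U.pth a a').support := by
  rcases U.tree_or hAB A' with hB | hA
  · refine ⟨B, Or.inr rfl, ?_⟩
    rintro a (rfl | rfl) a' (rfl | rfl)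
    · exact hB
    · exact U.tree_extend hA'B' hB h3
    · exact U.start_mem_pth _ _
    · exact U.start_mem_pth _ _
  · refine ⟨A, Or.inl rfl, ?_⟩
    rintro a (rfl | rfl) a' (rfl | rfl)
    · exact U.start_mem_pth _ _
    · exact U.start_mem_pth _ _
    · exact hA
    · exact U.tree_extend hA'B' hA h1

end JTree

section Star

def starG (α : Type) (c : α) : SimpleGraph α where
  Adj x y := x ≠ y ∧ (x = c ∨ y = c)
  symm := ⟨fun x y ⟨h1, h2⟩ => ⟨h1.symm, h2.symm⟩⟩
  loopless := ⟨fun x ⟨h, _⟩ => h rfl⟩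

open SimpleGraph in
lemma starG_aux {α : Type} [DecidableEq α] (c : α) (u : α) (hu : u ≠ c)
    (p : (starG α c).Walk u u) : ¬ p.IsCycle := by
  intro hp
  obtain ⟨b, h, q, rfl⟩ := Walk.not_nil_iff.mp hp.not_nil
  have hb : b = c := by
    rcases h.2 with h' | h'
    · exact absurd h' hu
    · exact h'
  rw [Walk.cons_isCycle_iff] at hp
  obtain ⟨hq, he⟩ := hp
  cases q with
  | nil => exact hu hb
  | cons h2 q2 =>
    rename_i y
    have hy : y ≠ c := fun hyc => h2.1 (hb.trans hyc.symm)
    cases q2 with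
    | nil =>
      apply he
      simp [Sym2.eq_swap]
    | cons h3 q3 =>
      rename_i z
      have hz : z = c := by
        rcases h3.2 with h' | h'
        · exact absurd h' hy
        · exact h'
      have hnd := hq.support_nodup
      rw [Walk.support_cons, Walk.support_cons] at hnd
      refine (List.nodup_cons.1 hnd).1 (List.mem_cons_of_mem _ ?_)
      rw [hb]
      exact hz ▸ Walk.start_mem_support q3

open SimpleGraph in
lemma starG_isTree {α : Type} [DecidableEq α] (c : α) : (starG α c).IsTree := by
  constructor
  · have : Nonempty α := ⟨c⟩
    have hr : ∀ x : α, (starG α c).Reachable x c := by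
      intro x
      by_cases h : x = c
      · subst h; exact Reachable.refl _
      · exact SimpleGraph.Adj.reachable ⟨h, Or.inr rfl⟩
    exact ⟨fun x y => (hr x).trans (hr y).symm⟩
  · intro v p hp
    by_cases hvc : v = c
    · obtain ⟨x, h, q, rfl⟩ := Walk.not_nil_iff.mp hp.not_nil
      have hx : x ≠ c := fun hxc => h.1 (hvc.trans hxc.symm)
      have hmem : x ∈ (Walk.cons h q).support := by
        rw [Walk.support_cons]
        exact List.mem_cons_of_mem _ (Walk.start_mem_support _)
      exact starG_aux c x hx _ (hp.rotate hmem)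
    · exact starG_aux c v hvc p hp

end Star


section Induce

open SimpleGraph

lemma reachable_induce {α : Type} {G : SimpleGraph α} (S : Set α) {a b : α}
    (ω : G.Walk a b) :
    (∀ z ∈ ω.support, z ∈ S) → ∀ (ha : a ∈ S) (hb : b ∈ S),
      (G.induce S).Reachable ⟨a, ha⟩ ⟨b, hb⟩ := by
  induction ω with
  | nil =>
    intro _ ha hb
    exact Reachable.refl _
  | cons h ω' ih =>
    rename_i u₁ u₂ u₃
    intro hω ha hb
    have hv : u₂ ∈ S := hω u₂ (by
      rw [Walk.support_cons]
      exact List.mem_cons_of_mem _ (Walk.start_mem_support _))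
    have hadj : (G.induce S).Adj ⟨u₁, ha⟩ ⟨u₂, hv⟩ := h
    exact hadj.reachable.trans (ih (fun z hz => hω z (by
      rw [Walk.support_cons]
      exact List.mem_cons_of_mem _ hz)) hv hb)

lemma isAcyclic_induce {α : Type} {G : SimpleGraph α} (hG : G.IsAcyclic) (S : Set α) :
    (G.induce S).IsAcyclic := by
  intro v c hc
  exact hG (c.map (SimpleGraph.Embedding.induce S).toHom)
    ((Walk.map_isCycle_iff_of_injective Subtype.val_injective).mpr hc)

end Induce

theorem sep_cherry_of_succ {V : Type} [DecidableEq V] {k : ℕ} (hk2 : 2 ≤ k)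
    (U T : JTree V) (hU : U.IsCherry (k-1)) (hT : T.IsCherry k)
    (hsucc : JTree.Succ U T) (hne : T.separators.Nonempty) :
    T.SeparatorsFormCherry k := by
  classical
  choose f g hfg hTC using hsucc
  have common : ∀ u w, T.G.Adj u w → ∀ s : U.ι, (s = f u ∨ s = g u) → (s = f w ∨ s = g w) →
      T.C u ∩ T.C w = U.C s := by
    intro u w huw s hs1 hs2
    have hsubu : U.C s ⊆ T.C u := by
      rw [hTC u]; rcases hs1 with rfl | rfl
      · exact Finset.subset_union_left
      · exact Finset.subset_union_right
    have hsubw : U.C s ⊆ T.C w := by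
      rw [hTC w]; rcases hs2 with rfl | rfl
      · exact Finset.subset_union_left
      · exact Finset.subset_union_right
    have h1 : (T.C u ∩ T.C w).card = k - 1 := hT.2 u w huw
    have h2 : (U.C s).card = k - 1 := hU.1 s
    exact (Finset.eq_of_subset_of_card_le (Finset.subset_inter hsubu hsubw)
      (by rw [h1, h2])).symm
  have key : ∀ u w, T.G.Adj u w → ∃ s : U.ι, (s = f u ∨ s = g u) ∧ (s = f w ∨ s = g w) ∧
      T.C u ∩ T.C w = U.C s := by
    intro u w huw
    by_cases hc : f u = f w ∨ f u = g w ∨ g u = f w ∨ g u = g w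
    · rcases hc with h | h | h | h
      · exact ⟨f u, Or.inl rfl, Or.inl h, common u w huw _ (Or.inl rfl) (Or.inl h)⟩
      · exact ⟨f u, Or.inl rfl, Or.inr h, common u w huw _ (Or.inl rfl) (Or.inr h)⟩
      · exact ⟨g u, Or.inr rfl, Or.inl h, common u w huw _ (Or.inr rfl) (Or.inl h)⟩
      · exact ⟨g u, Or.inr rfl, Or.inr h, common u w huw _ (Or.inr rfl) (Or.inr h)⟩
    · exfalso
      push_neg at hc
      obtain ⟨hc1, hc2, hc3, hc4⟩ := hc
      obtain ⟨P, hPmem, hP⟩ := U.exists_side (hfg u) (hfg w) hc1 hc3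
      obtain ⟨Q, hQmem, hQ⟩ := U.exists_side (hfg w) (hfg u) (Ne.symm hc1) (Ne.symm hc2)
      have hsub : T.C u ∩ T.C w ⊆ U.C P ∩ U.C Q := by
        intro x hx
        have hxu := (Finset.mem_inter.1 hx).1
        have hxw := (Finset.mem_inter.1 hx).2
        rw [hTC u] at hxu
        rw [hTC w] at hxw
        obtain ⟨a, ha, hxa⟩ : ∃ a, (a = f u ∨ a = g u) ∧ x ∈ U.C a := by
          rcases Finset.mem_union.1 hxu with h | h
          exacts [⟨f u, Or.inl rfl, h⟩, ⟨g u, Or.inr rfl, h⟩]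
        obtain ⟨a', ha', hxa'⟩ : ∃ a', (a' = f w ∨ a' = g w) ∧ x ∈ U.C a' := by
          rcases Finset.mem_union.1 hxw with h | h
          exacts [⟨f w, Or.inl rfl, h⟩, ⟨g w, Or.inr rfl, h⟩]
        refine Finset.mem_inter.2 ⟨?_, ?_⟩
        · exact U.rip a a' (U.pth a a') (U.pth_isPath a a') P (hP a ha a' ha')
            (Finset.mem_inter.2 ⟨hxa, hxa'⟩)
        · exact U.rip a' a (U.pth a' a) (U.pth_isPath a' a) Q (hQ a' ha' a ha)
            (Finset.mem_inter.2 ⟨hxa', hxa⟩)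
      have hPQ : P ≠ Q := by
        rcases hPmem with rfl | rfl <;> rcases hQmem with rfl | rfl <;> assumption
      have hle := Finset.card_le_card hsub
      rw [hT.2 u w huw] at hle
      have hle2 := U.inter_card_le hU hPQ
      omega
  set S : Set U.ι := {P | U.C P ∈ T.separators} with hS_def
  have hSmem : ∀ P ∈ S, ∃ u, P = f u ∨ P = g u := by
    intro P hP
    obtain ⟨i, j, hij, hCP⟩ := hP
    obtain ⟨s, hs1, hs2, hseq⟩ := key i j hij
    have hPs : P = s := U.C_injective (by rw [hCP, hseq])
    exact ⟨i, hPs ▸ hs1⟩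
  have step : ∀ (u : T.ι) (P Q : U.ι), (P = f u ∨ P = g u) → (Q = f u ∨ Q = g u) →
      ∃ ω : U.G.Walk P Q, ∀ z ∈ ω.support, z = P ∨ z = Q := by
    intro u P Q hP hQ
    by_cases hPQ : P = Q
    · subst hPQ
      exact ⟨SimpleGraph.Walk.nil, by simp⟩
    · have hadj : U.G.Adj P Q := by
        rcases hP with rfl | rfl <;> rcases hQ with rfl | rfl
        · exact absurd rfl hPQ
        · exact hfg u
        · exact (hfg u).symm
        · exact absurd rfl hPQ
      refine ⟨SimpleGraph.Walk.cons hadj SimpleGraph.Walk.nil, ?_⟩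
      intro z hz
      simpa using hz
  have main : ∀ (u w : T.ι) (W : T.G.Walk u w), ∀ (P Q : U.ι), (P = f u ∨ P = g u) →
      (Q = f w ∨ Q = g w) → P ∈ S → Q ∈ S →
      ∃ ω : U.G.Walk P Q, ∀ z ∈ ω.support, z ∈ S := by
    intro u w W
    induction W with
    | nil =>
      intro P Q hP hQ hPS hQS
      obtain ⟨ω, hω⟩ := step _ P Q hP hQ
      exact ⟨ω, fun z hz => by rcases hω z hz with rfl | rfl <;> assumption⟩
    | cons h W' ih =>
      rename_i u₁ u₂ u₃
      intro P Q hP hQ hPS hQS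
      obtain ⟨s, hs1, hs2, hseq⟩ := key _ _ h
      have hsS : s ∈ S := ⟨u₁, u₂, h, hseq.symm⟩
      obtain ⟨ω1, hω1⟩ := step u₁ P s hP hs1
      obtain ⟨ω2, hω2⟩ := ih s Q hs2 hQ hsS hQS
      refine ⟨ω1.append ω2, ?_⟩
      intro z hz
      rw [SimpleGraph.Walk.support_append] at hz
      rcases List.mem_append.1 hz with h1 | h2
      · rcases hω1 z h1 with rfl | rfl
        · exact hPS
        · exact hsS
      · exact hω2 z (List.mem_of_mem_tail h2)
  obtain ⟨s0, i0, j0, hij0, hs0⟩ := hne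
  obtain ⟨sn, -, -, hseq0⟩ := key i0 j0 hij0
  have hsnS : sn ∈ S := ⟨i0, j0, hij0, hseq0.symm⟩
  haveI : Fintype ↥S := Fintype.ofFinite _
  haveI : Nonempty ↥S := ⟨⟨sn, hsnS⟩⟩
  refine ⟨⟨↥S, U.G.induce S, ⟨?_, ?_⟩, fun P => U.C P.val, ?_, ?_⟩, ⟨?_, ?_⟩, ?_⟩
  · -- connected
    refine SimpleGraph.Connected.mk ?_
    intro x y
    obtain ⟨ux, hux⟩ := hSmem x.val x.2
    obtain ⟨uy, huy⟩ := hSmem y.val y.2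
    obtain ⟨ω, hω⟩ := main ux uy (T.pth ux uy) x.val y.val hux huy x.2 y.2
    exact reachable_induce S ω hω x.2 y.2
  · -- acyclic
    exact isAcyclic_induce U.isTree.2 S
  · -- noSub
    intro i j hne' hsub
    exact U.noSub i.val j.val (fun hh => hne' (Subtype.ext hh)) hsub
  · -- rip
    intro i j p hp x hx
    have hmap := SimpleGraph.Walk.map_isPath_of_injective
      (f := (SimpleGraph.Embedding.induce S).toHom) Subtype.val_injective hp
    exact U.rip i.val j.val _ hmap x.val
      (by have h := SimpleGraph.Walk.support_map (SimpleGraph.Embedding.induce S).toHom p; exact cast (congrArg (fun l => (SimpleGraph.Embedding.induce S).toHom x ∈ l) h.symm) (List.mem_map_of_mem hx))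
  · -- cluster cards
    intro i
    exact hU.1 i.val
  · -- separator cards
    intro i j hadj
    exact hU.2 i.val j.val hadj
  · -- range
    ext s
    constructor
    · rintro ⟨P, rfl⟩
      exact P.2
    · intro hs
      obtain ⟨i, j, hij, hseq⟩ := hs
      obtain ⟨s', hs1', hs2', hseq'⟩ := key i j hij
      have hmem : s' ∈ S := ⟨i, j, hij, hseq'.symm⟩
      exact ⟨⟨s', hmem⟩, by rw [hseq]; exact hseq'.symm⟩

/-- If a `k`-order cherry tree `T` on `V` (`2 ≤ k ≤ |V| - 1`) is a
truncated R-vine at level `k`, then its separators form a `(k-1)`-order cherry tree. -/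
theorem truncated_rvine_imp_sep_cherry
    {V : Type} [Fintype V] [DecidableEq V] (d k : ℕ)
    (hd : Fintype.card V = d) (hk2 : 2 ≤ k) (hkd : k ≤ d - 1)
    (T : JTree V) (hcov : T.CoversAll) (hch : T.IsCherry k)
    (htr : T.IsTruncatedRVine k) :
    T.SeparatorsFormCherry k := by
  classical
  obtain ⟨i0⟩ := T.isTree.1.nonempty
  have hex : ∃ v : V, v ∉ T.C i0 := by
    by_contra h
    push_neg at h
    have hsub : (Finset.univ : Finset V) ⊆ T.C i0 := fun v _ => h v
    have hcc := Finset.card_le_card hsub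
    rw [Finset.card_univ, hd, hch.1 i0] at hcc
    omega
  obtain ⟨v, hv⟩ := hex
  obtain ⟨i1, hvi1⟩ := hcov v
  have hne01 : i0 ≠ i1 := fun h => hv (h ▸ hvi1)
  obtain ⟨x0, hadj0, q0, -⟩ := SimpleGraph.Walk.exists_eq_cons_of_ne hne01 (T.pth i0 i1)
  have hsepne : T.separators.Nonempty := ⟨T.C i0 ∩ T.C x0, i0, x0, hadj0, rfl⟩
  rcases Nat.lt_or_ge k 3 with hk3 | hk3
  · -- k = 2
    have hk2' : k = 2 := by omega
    subst hk2'
    haveI : Fintype {s // s ∈ T.separators} := Fintype.ofFinite _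
    obtain ⟨c0v, hc0⟩ := hsepne
    have hcard1 : ∀ s ∈ T.separators, s.card = 1 := by
      rintro s ⟨i, j, hij, rfl⟩
      exact hch.2 i j hij
    have hdisj : ∀ i j : {s // s ∈ T.separators}, i ≠ j → i.val ∩ j.val = ∅ := by
      intro i j hij
      rw [Finset.eq_empty_iff_forall_notMem]
      intro y hy
      obtain ⟨a, ha⟩ := Finset.card_eq_one.mp (hcard1 _ i.2)
      obtain ⟨b, hb⟩ := Finset.card_eq_one.mp (hcard1 _ j.2)
      rw [Finset.mem_inter, ha, hb] at hy
      obtain ⟨h1, h2⟩ := hy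
      rw [Finset.mem_singleton] at h1 h2
      exact hij (Subtype.ext (by rw [ha, hb, ← h1, ← h2]))
    refine ⟨⟨{s // s ∈ T.separators}, starG _ ⟨c0v, hc0⟩, starG_isTree _,
      fun s => s.val, ?_, ?_⟩, ⟨?_, ?_⟩, ?_⟩
    · intro i j hne' hsub
      apply hne'
      apply Subtype.ext
      exact Finset.eq_of_subset_of_card_le hsub
        (by rw [hcard1 _ i.2, hcard1 _ j.2])
    · intro i j p hp x hx
      by_cases hij : i = j
      · subst hij
        rw [SimpleGraph.Walk.isPath_iff_eq_nil] at hp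
        subst hp
        simp only [SimpleGraph.Walk.support_nil, List.mem_singleton] at hx
        subst hx
        exact Finset.inter_subset_left
      · rw [hdisj i j hij]
        exact Finset.empty_subset _
    · intro i
      exact hcard1 _ i.2
    · intro i j hadj
      rw [hdisj i j hadj.1]
      simp
    · exact Subtype.range_val
  · -- k ≥ 3
    obtain ⟨Ts, hprop, hsucc', hTk⟩ := htr
    have hU : (Ts (k-1)).IsCherry (k-1) := (hprop (k-1) (by omega) (by omega)).2
    have hsuccUT : JTree.Succ (Ts (k-1)) T := by
      have hh := hsucc' (k-1) (by omega) (by omega)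
      rwa [show k - 1 + 1 = k by omega, hTk] at hh
    exact sep_cherry_of_succ hk2 (Ts (k-1)) T hU hch hsuccUT hsepne
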